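/- In the seminal-curve recursion, the quantity Y_n³/S_n almost surely converges to zero geometrically fast: for every constant c with 0 ≤ c < 3, one has c^n · Y_n³/S_n → 0 almost surely as n → ∞. -/

import Mathlib

open MeasureTheory ProbabilityTheory Filter

lemma aux_iIndepFun_precomp {Ω ι ι' : Type*} [MeasurableSpace Ω] {μ : Measure Ω}
    {β : Type*} [mβ : MeasurableSpace β] {f : ι → Ω → β}
    (h : iIndepFun f μ) {g : ι' → ι} (hg : Function.Injective g) :
    iIndepFun (fun i => f (g i)) μ := by
  classical
  rw [iIndepFun_iff_measure_inter_preimage_eq_mul] at h ⊢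
  intro S sets hsets
  set sets' : ι → Set β := fun i => ⋂ j ∈ S.filter (fun j => g j = i), sets j with hsets'
  have hkey : ∀ j ∈ S, sets' (g j) = sets j := by
    intro j hj
    have hfil : S.filter (fun k => g k = g j) = {j} := by
      ext k
      simp only [Finset.mem_filter, Finset.mem_singleton]
      constructor
      · rintro ⟨hk, hgk⟩; exact hg hgk
      · rintro rfl; exact ⟨hj, rfl⟩
    show (⋂ k ∈ S.filter (fun k => g k = g j), sets k) = sets j
    rw [hfil]
    simp
  have hmeas : ∀ i ∈ S.image g, MeasurableSet[mβ] (sets' i) := by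
    intro i hi
    obtain ⟨j, hj, rfl⟩ := Finset.mem_image.mp hi
    rw [hkey j hj]; exact hsets j hj
  have := h (S.image g) hmeas
  rw [Finset.set_biInter_finset_image, Finset.prod_image] at this
  · rw [Set.iInter₂_congr (fun j (hj : j ∈ S) => by rw [hkey j hj]),
      Finset.prod_congr rfl (fun j hj => by rw [hkey j hj])] at this
    exact this
  · intro a _ b _ hab; exact hg hab

lemma aux_lintegral_prod {Ω : Type*} [MeasurableSpace Ω] {μ : Measure Ω} [IsProbabilityMeasure μ]
    {g : ℕ → Ω → ℝ} (hm : ∀ k, Measurable (g k)) (hnn : ∀ k, 0 ≤ᵐ[μ] g k)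
    (hind : iIndepFun g μ) (n : ℕ) :
    ∫⁻ ω, ENNReal.ofReal (∏ k ∈ Finset.range n, g k ω) ∂μ
      = ∏ k ∈ Finset.range n, ∫⁻ ω, ENNReal.ofReal (g k ω) ∂μ := by
  induction n with
  | zero => simp
  | succ n ih =>
    have hP : ∀ᵐ ω ∂μ, 0 ≤ ∏ k ∈ Finset.range n, g k ω := by
      have := ae_all_iff.mpr hnn
      filter_upwards [this] with ω hω
      exact Finset.prod_nonneg fun k _ => hω k
    have hcong : ∀ᵐ ω ∂μ, ENNReal.ofReal (∏ k ∈ Finset.range (n+1), g k ω)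
        = ((fun ω => ENNReal.ofReal (∏ k ∈ Finset.range n, g k ω))
          * fun ω => ENNReal.ofReal (g n ω)) ω := by
      filter_upwards [hP] with ω hω
      rw [Finset.prod_range_succ, ENNReal.ofReal_mul hω]
      rfl
    have hip : IndepFun (fun ω => ENNReal.ofReal (∏ k ∈ Finset.range n, g k ω))
        (fun ω => ENNReal.ofReal (g n ω)) μ := by
      have h0 := (hind.indepFun_prod_range_succ hm n).comp
        ENNReal.measurable_ofReal ENNReal.measurable_ofReal
      have he : (ENNReal.ofReal ∘ ∏ j ∈ Finset.range n, g j)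
          = fun ω => ENNReal.ofReal (∏ k ∈ Finset.range n, g k ω) := by
        funext ω; simp [Finset.prod_apply]
      rwa [he] at h0
    rw [lintegral_congr_ae hcong,
      lintegral_mul_eq_lintegral_mul_lintegral_of_indepFun
        ((Finset.measurable_prod _ (fun k _ => hm k)).ennreal_ofReal)
        ((hm n).ennreal_ofReal) hip,
      ih, Finset.prod_range_succ]

lemma aux_integral_one_sub_sqrt : ∫ x in Set.Icc (0:ℝ) 1, (1 - Real.sqrt x) = 1/3 := by
  rw [MeasureTheory.integral_Icc_eq_integral_Ioc,
    ← intervalIntegral.integral_of_le (by norm_num : (0:ℝ) ≤ 1)]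
  have h1 : ∫ x in (0:ℝ)..1, Real.sqrt x = 2/3 := by
    have := integral_rpow (a := 0) (b := 1) (r := 1/2) (Or.inl (by norm_num))
    rw [intervalIntegral.integral_congr (g := fun x : ℝ => x ^ ((1:ℝ)/2))
      (fun x hx => Real.sqrt_eq_rpow x)]
    rw [this, Real.one_rpow, Real.zero_rpow (by norm_num)]
    norm_num
  rw [intervalIntegral.integral_sub intervalIntegrable_const
    (Continuous.intervalIntegrable Real.continuous_sqrt 0 1), h1]
  simp
  norm_num

lemma aux_lintegral_one_sub_sqrt :
    ∫⁻ x in Set.Icc (0:ℝ) 1, ENNReal.ofReal (1 - Real.sqrt x) = ENNReal.ofReal (1/3) := by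
  rw [← aux_integral_one_sub_sqrt,
    ofReal_integral_eq_lintegral_ofReal]
  · exact (continuous_const.sub Real.continuous_sqrt).integrableOn_Icc
  · rw [EventuallyLE, ae_restrict_iff' measurableSet_Icc]
    exact ae_of_all _ fun x hx => sub_nonneg.mpr (Real.sqrt_le_one.mpr hx.2)


/-- The σ-algebra `F n` generated by `Γ`, `V`, and `U_1, …, U_n`, `E_1, …, E_n`.
(Here the random variables `U i`, `E i` of the Lean formalization, for `i < n`,
represent the mathematical `U_{i+1}`, `E_{i+1}`: the indexing is shifted by one.) -/
def seminalFiltration {Ω : Type*} [MeasurableSpace Ω] (U E : ℕ → Ω → ℝ) (Γ V : Ω → ℝ)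
    (n : ℕ) : MeasurableSpace Ω :=
  MeasurableSpace.comap Γ inferInstance ⊔ MeasurableSpace.comap V inferInstance ⊔
    ⨆ i < n, (MeasurableSpace.comap (U i) inferInstance ⊔
      MeasurableSpace.comap (E i) inferInstance)

theorem seminal_curve_cube_ratio_decay
    {Ω : Type*} [MeasurableSpace Ω] (μ : Measure Ω) [IsProbabilityMeasure μ]
    -- the driving random variables: `U n`, `E n` represent the mathematical
    -- `U_{n+1}`, `E_{n+1}` (indexing shifted by one)
    (U E : ℕ → Ω → ℝ) (Γ V : Ω → ℝ) (Y S G : ℕ → Ω → ℝ)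
    (hUm : ∀ n, Measurable (U n)) (hEm : ∀ n, Measurable (E n))
    (hΓm : Measurable Γ) (hVm : Measurable V)
    -- each `U n` and `V` is uniformly distributed on `[0,1]`
    (hU : ∀ n, μ.map (U n) = volume.restrict (Set.Icc (0:ℝ) 1))
    (hV : μ.map V = volume.restrict (Set.Icc (0:ℝ) 1))
    -- each `E n` has the standard exponential distribution (rate 1)
    (hE : ∀ n, μ.map (E n) = expMeasure 1)
    -- `Γ` has the Rayleigh(√2) distribution: `P(Γ > γ) = exp (-γ²/4)` for `γ ≥ 0`
    (hΓ : ∀ γ : ℝ, 0 ≤ γ → μ {ω | Γ ω > γ} = ENNReal.ofReal (Real.exp (-(γ ^ 2) / 4)))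
    -- `(U n)`, `(E n)`, `Γ`, `V` are mutually independent
    (hindep : iIndepFun
      (Sum.elim U (Sum.elim E (fun b : Bool => bif b then Γ else V))) μ)
    -- initial conditions `S 0 = 1`, `Y 0 = (1 - V)·Γ`, `G 0 = V·Γ`
    (hS0 : ∀ ω, S 0 ω = 1)
    (hY0 : ∀ ω, Y 0 ω = (1 - V ω) * Γ ω)
    (hG0 : ∀ ω, G 0 ω = V ω * Γ ω)
    -- the seminal-curve recursion
    (hYrec : ∀ n ω, Y (n + 1) ω = Y n ω * (1 - Real.sqrt (U n ω)))
    (hSrec : ∀ n ω, 1 / S (n + 1) ω = 1 / S n ω + 4 / (Y n ω) ^ 2 * E n ω)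
    (hGrec : ∀ n ω, G (n + 1) ω = G n ω + Y n ω / S (n + 1) ω * Real.sqrt (U n ω))
    :
    ∀ c : ℝ, 0 ≤ c → c < 3 →
      ∀ᵐ ω ∂μ, Tendsto (fun n => c ^ n * (Y n ω) ^ 3 / S n ω) atTop (nhds 0) := by
  intro c hc0 hc3
  -- the comparison rate
  set r : ℝ := (c + 3) / 6 with hrdef
  have hr0 : 0 < r := by rw [hrdef]; linarith
  have hr1 : r < 1 := by rw [hrdef]; linarith
  have hcr : c < 3 * r := by rw [hrdef]; linarith
  -- the product process
  set P : ℕ → Ω → ℝ := fun n ω => ∏ k ∈ Finset.range n, (1 - Real.sqrt (U k ω)) with hPdef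
  have hPsucc : ∀ n ω, P (n+1) ω = P n ω * (1 - Real.sqrt (U n ω)) := by
    intro n ω; simp only [hPdef]; exact Finset.prod_range_succ _ _
  have hPm : ∀ n, Measurable (P n) := by
    intro n; simp only [hPdef]
    exact Finset.measurable_prod _
      (fun k _ => measurable_const.sub (Real.continuous_sqrt.measurable.comp (hUm k)))
  -- a.e. facts about the driving variables
  have hUk : ∀ k, ∀ᵐ ω ∂μ, U k ω ∈ Set.Icc (0:ℝ) 1 := by
    intro k
    rw [ae_iff]
    have hs : {ω | ¬ U k ω ∈ Set.Icc (0:ℝ) 1} = U k ⁻¹' (Set.Icc (0:ℝ) 1)ᶜ := rfl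
    rw [hs, ← Measure.map_apply (hUm k) measurableSet_Icc.compl, hU k,
      Measure.restrict_apply measurableSet_Icc.compl, Set.compl_inter_self, measure_empty]
  have hUae : ∀ᵐ ω ∂μ, ∀ k, U k ω ∈ Set.Icc (0:ℝ) 1 := ae_all_iff.mpr hUk
  have hexp0 : expMeasure 1 (Set.Iio 0) = 0 := by
    rw [expMeasure, gammaMeasure, withDensity_apply _ measurableSet_Iio]
    exact lintegral_gammaPDF_of_nonpos le_rfl
  have hEnn : ∀ᵐ ω ∂μ, ∀ k, 0 ≤ E k ω := by
    rw [ae_all_iff]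
    intro k
    rw [ae_iff]
    have hs : {ω | ¬ 0 ≤ E k ω} = E k ⁻¹' (Set.Iio 0) := by ext ω; simp [not_le]
    rw [hs, ← Measure.map_apply (hEm k) measurableSet_Iio, hE k, hexp0]
  haveI hprob : IsProbabilityMeasure (expMeasure 1) :=
    isProbabilityMeasure_expMeasure one_pos
  have hexpIoi : ∀ t : ℝ, 0 ≤ t →
      expMeasure 1 (Set.Ioi t) = ENNReal.ofReal (Real.exp (-t)) := by
    intro t ht
    have hIic : expMeasure 1 (Set.Iic t) = ENNReal.ofReal (1 - Real.exp (-t)) := by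
      rw [expMeasure, gammaMeasure, withDensity_apply _ measurableSet_Iic]
      calc ∫⁻ x in Set.Iic t, gammaPDF 1 1 x
          = ∫⁻ x in Set.Iic t, exponentialPDF 1 x := rfl
        _ = ENNReal.ofReal (if 0 ≤ t then 1 - Real.exp (-(1*t)) else 0) :=
            lintegral_exponentialPDF_eq_antiDeriv one_pos t
        _ = ENNReal.ofReal (1 - Real.exp (-t)) := by rw [if_pos ht]; norm_num
    have hq : 0 ≤ 1 - Real.exp (-t) := by
      have : Real.exp (-t) ≤ 1 := Real.exp_le_one_iff.mpr (by linarith)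
      linarith
    rw [← Set.compl_Iic, measure_compl measurableSet_Iic (measure_ne_top _ _), measure_univ,
      hIic, ← ENNReal.ofReal_one, ← ENNReal.ofReal_sub _ hq]
    congr 1
    ring
  -- Borel–Cantelli for the exponential tails
  have hBt : ∀ k : ℕ, μ {ω | ((k:ℝ)+1) < E k ω} = ENNReal.ofReal (Real.exp (-((k:ℝ)+1))) := by
    intro k
    have hs : {ω | ((k:ℝ)+1) < E k ω} = E k ⁻¹' (Set.Ioi ((k:ℝ)+1)) := rfl
    rw [hs, ← Measure.map_apply (hEm k) measurableSet_Ioi, hE k, hexpIoi _ (by positivity)]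
  have hsummE : Summable (fun k : ℕ => Real.exp (-((k:ℝ)+1))) := by
    have h2 : Summable (fun k : ℕ => Real.exp (-1) * Real.exp (-1) ^ k) :=
      (summable_geometric_of_lt_one (Real.exp_pos _).le
        (Real.exp_lt_one_iff.mpr (by norm_num))).mul_left _
    refine h2.congr fun k => ?_
    rw [← Real.exp_nat_mul, ← Real.exp_add]
    congr 1
    push_cast
    ring
  have hsumEtail : (∑' k : ℕ, μ {ω | ((k:ℝ)+1) < E k ω}) ≠ ⊤ := by
    rw [tsum_congr hBt, ← ENNReal.ofReal_tsum_of_nonneg (fun k => (Real.exp_pos _).le) hsummE]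
    exact ENNReal.ofReal_ne_top
  have hEev : ∀ᵐ ω ∂μ, ∀ᶠ k in atTop, E k ω ≤ (k:ℝ)+1 := by
    filter_upwards [ae_eventually_notMem hsumEtail] with ω hω
    filter_upwards [hω] with k hk
    exact not_lt.mp hk
  -- nonnegativity of Y 0
  have hVae : ∀ᵐ ω ∂μ, V ω ∈ Set.Icc (0:ℝ) 1 := by
    rw [ae_iff]
    have hs : {ω | ¬ V ω ∈ Set.Icc (0:ℝ) 1} = V ⁻¹' (Set.Icc (0:ℝ) 1)ᶜ := rfl
    rw [hs, ← Measure.map_apply hVm measurableSet_Icc.compl, hV,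
      Measure.restrict_apply measurableSet_Icc.compl, Set.compl_inter_self, measure_empty]
  have hΓae : ∀ᵐ ω ∂μ, 0 < Γ ω := by
    have h0 := hΓ 0 le_rfl
    have hset : MeasurableSet {ω | Γ ω > 0} := measurableSet_lt measurable_const hΓm
    have h1 : μ {ω | Γ ω > 0} = 1 := by
      rw [h0]
      norm_num
    rw [ae_iff]
    have hs : {ω | ¬ 0 < Γ ω} = {ω | Γ ω > 0}ᶜ := by ext ω; simp
    rw [hs, measure_compl hset (measure_ne_top _ _), measure_univ, h1, tsub_self]
  have hY0nn : ∀ᵐ ω ∂μ, 0 ≤ Y 0 ω := by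
    filter_upwards [hVae, hΓae] with ω hVω hΓω
    rw [hY0]
    exact mul_nonneg (by linarith [hVω.2]) hΓω.le
  -- independence of the factors
  have hUind : iIndepFun U μ :=
    aux_iIndepFun_precomp hindep Sum.inl_injective
  have hgind : iIndepFun
      (fun k => fun ω => 1 - Real.sqrt (U k ω)) μ :=
    hUind.comp (fun _ => fun x : ℝ => 1 - Real.sqrt x)
      (fun _ => measurable_const.sub Real.continuous_sqrt.measurable)
  have hgm : ∀ k, Measurable (fun ω => 1 - Real.sqrt (U k ω)) :=
    fun k => measurable_const.sub (Real.continuous_sqrt.measurable.comp (hUm k))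
  have hgnn : ∀ k, 0 ≤ᵐ[μ] (fun ω => 1 - Real.sqrt (U k ω)) := by
    intro k
    filter_upwards [hUk k] with ω hω
    exact sub_nonneg.mpr (Real.sqrt_le_one.mpr hω.2)
  have hfact : ∀ k, ∫⁻ ω, ENNReal.ofReal (1 - Real.sqrt (U k ω)) ∂μ = ENNReal.ofReal (1/3) := by
    intro k
    have hm : Measurable fun x : ℝ => ENNReal.ofReal (1 - Real.sqrt x) :=
      (measurable_const.sub Real.continuous_sqrt.measurable).ennreal_ofReal
    rw [← lintegral_map hm (hUm k), hU k]
    exact aux_lintegral_one_sub_sqrt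
  have hPint : ∀ n, ∫⁻ ω, ENNReal.ofReal (P n ω) ∂μ = ENNReal.ofReal (1/3) ^ n := by
    intro n
    simp only [hPdef]
    rw [aux_lintegral_prod hgm hgnn hgind,
      Finset.prod_congr rfl (fun k _ => hfact k), Finset.prod_const, Finset.card_range]
  -- Markov + Borel–Cantelli for the weighted product
  set A : ℕ → Set Ω := fun n => {ω | r ^ n ≤ c ^ n * ((n:ℝ)^2+1) * P n ω} with hAdef
  have hμA : ∀ n, μ (A n) ≤ ENNReal.ofReal (((n:ℝ)^2+1) * (c/(3*r))^n) := by
    intro n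
    have hFm : Measurable (fun ω => ENNReal.ofReal (c ^ n * ((n:ℝ)^2+1) * P n ω)) :=
      (measurable_const.mul (hPm n)).ennreal_ofReal
    have hmar := mul_meas_ge_le_lintegral (μ := μ) hFm (ENNReal.ofReal (r ^ n))
    have hsub : A n ⊆ {ω | ENNReal.ofReal (r ^ n)
        ≤ ENNReal.ofReal (c ^ n * ((n:ℝ)^2+1) * P n ω)} :=
      fun ω hω => ENNReal.ofReal_le_ofReal hω
    have hconst : (0:ℝ) ≤ c ^ n * ((n:ℝ)^2+1) := by positivity
    have hlint : ∫⁻ ω, ENNReal.ofReal (c ^ n * ((n:ℝ)^2+1) * P n ω) ∂μ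
        = ENNReal.ofReal (c ^ n * ((n:ℝ)^2+1)) * ENNReal.ofReal (1/3) ^ n := by
      have hpt : ∀ ω, ENNReal.ofReal (c ^ n * ((n:ℝ)^2+1) * P n ω)
          = ENNReal.ofReal (c ^ n * ((n:ℝ)^2+1)) * ENNReal.ofReal (P n ω) :=
        fun ω => ENNReal.ofReal_mul hconst
      simp_rw [hpt]
      rw [lintegral_const_mul _ ((hPm n).ennreal_ofReal), hPint n]
    have hr0n : (0:ℝ) < r ^ n := pow_pos hr0 n
    have hne0 : ENNReal.ofReal (r ^ n) ≠ 0 := by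
      rw [Ne, ENNReal.ofReal_eq_zero]; exact not_le.mpr hr0n
    have hkey : ENNReal.ofReal (r ^ n) * μ (A n)
        ≤ ENNReal.ofReal (r ^ n) * ENNReal.ofReal (((n:ℝ)^2+1) * (c/(3*r))^n) := by
      calc ENNReal.ofReal (r ^ n) * μ (A n)
          ≤ ENNReal.ofReal (r ^ n) * μ {ω | ENNReal.ofReal (r ^ n)
              ≤ ENNReal.ofReal (c ^ n * ((n:ℝ)^2+1) * P n ω)} :=
            mul_le_mul_right (measure_mono hsub) _
        _ ≤ ∫⁻ ω, ENNReal.ofReal (c ^ n * ((n:ℝ)^2+1) * P n ω) ∂μ := hmar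
        _ = ENNReal.ofReal (c ^ n * ((n:ℝ)^2+1)) * ENNReal.ofReal (1/3) ^ n := hlint
        _ = ENNReal.ofReal (r ^ n) * ENNReal.ofReal (((n:ℝ)^2+1) * (c/(3*r))^n) := by
            rw [← ENNReal.ofReal_pow (by norm_num : (0:ℝ) ≤ 1/3),
              ← ENNReal.ofReal_mul hconst, ← ENNReal.ofReal_mul hr0n.le]
            congr 1
            have hrne : r ≠ 0 := hr0.ne'
            have hbase : r * (c/(3*r)) = c * (1/3) := by field_simp
            calc c ^ n * ((n:ℝ)^2+1) * (1/3)^n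
                = ((n:ℝ)^2+1) * (c * (1/3))^n := by rw [mul_pow]; ring
              _ = ((n:ℝ)^2+1) * (r * (c/(3*r)))^n := by rw [hbase]
              _ = r^n * (((n:ℝ)^2+1) * (c/(3*r))^n) := by rw [mul_pow]; ring
    exact (ENNReal.mul_le_mul_iff_right hne0 ENNReal.ofReal_ne_top).mp hkey
  have hx0 : (0:ℝ) ≤ c/(3*r) := div_nonneg hc0 (by linarith)
  have hx1 : c/(3*r) < 1 := (div_lt_one (by linarith)).mpr hcr
  have hsummb : Summable (fun n : ℕ => ((n:ℝ)^2+1) * (c/(3*r))^n) := by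
    have h1 : Summable (fun n : ℕ => (n:ℝ)^2 * (c/(3*r))^n) :=
      summable_pow_mul_geometric_of_norm_lt_one 2
        (by rw [Real.norm_eq_abs, abs_of_nonneg hx0]; exact hx1)
    have h2 : Summable (fun n : ℕ => (c/(3*r))^n) := summable_geometric_of_lt_one hx0 hx1
    refine (h1.add h2).congr fun n => ?_
    ring
  have hAsum : (∑' n, μ (A n)) ≠ ⊤ := by
    refine ne_top_of_le_ne_top ?_ (ENNReal.tsum_le_tsum hμA)
    rw [← ENNReal.ofReal_tsum_of_nonneg (fun n => by positivity) hsummb]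
    exact ENNReal.ofReal_ne_top
  have hQae := ae_eventually_notMem hAsum
  -- the limit of the geometric envelope
  have hrlim : Tendsto (fun n : ℕ => r ^ n) atTop (nhds 0) :=
    tendsto_pow_atTop_nhds_zero_of_lt_one hr0.le hr1
  -- putting everything together pathwise
  filter_upwards [hUae, hEnn, hY0nn, hEev, hQae] with ω hu he hy0 hev hq
  have hfac : ∀ k, 0 ≤ 1 - Real.sqrt (U k ω) :=
    fun k => sub_nonneg.mpr (Real.sqrt_le_one.mpr (hu k).2)
  have hfac1 : ∀ k, 1 - Real.sqrt (U k ω) ≤ 1 := by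
    intro k
    have := Real.sqrt_nonneg (U k ω)
    linarith
  have hPnn : ∀ n, 0 ≤ P n ω := by
    intro n; simp only [hPdef]; exact Finset.prod_nonneg fun k _ => hfac k
  -- the pathwise induction
  have key : ∀ n, 0 < S n ω ∧ Y n ω = Y 0 ω * P n ω ∧
      Y n ω ^ 3 / S n ω ≤ P n ω * (Y 0 ω ^ 3 + 4 * Y 0 ω * ∑ k ∈ Finset.range n, E k ω) := by
    intro n
    induction n with
    | zero =>
      refine ⟨by rw [hS0]; norm_num, by simp [hPdef], ?_⟩
      rw [hS0]
      simp [hPdef]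
    | succ n ih =>
      obtain ⟨hS, hYP, hB⟩ := ih
      have hSne : S n ω ≠ 0 := hS.ne'
      have hEn : 0 ≤ 4 / Y n ω ^ 2 * E n ω :=
        mul_nonneg (div_nonneg (by norm_num) (sq_nonneg _)) (he n)
      have hSpos' : 0 < S (n+1) ω := by
        have h1 : 0 < 1 / S (n+1) ω := by
          rw [hSrec]
          have := one_div_pos.mpr hS
          linarith
        exact one_div_pos.mp h1
      have hYnn : 0 ≤ Y n ω := by rw [hYP]; exact mul_nonneg hy0 (hPnn n)
      have hY' : Y (n+1) ω = Y 0 ω * P (n+1) ω := by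
        rw [hYrec, hYP, hPsucc]; ring
      refine ⟨hSpos', hY', ?_⟩
      have hsumnn : 0 ≤ ∑ k ∈ Finset.range (n+1), E k ω :=
        Finset.sum_nonneg fun k _ => he k
      have hTnn : 0 ≤ Y 0 ω ^ 3 + 4 * Y 0 ω * ∑ k ∈ Finset.range (n+1), E k ω := by
        have := pow_nonneg hy0 3
        have := mul_nonneg (mul_nonneg (by norm_num : (0:ℝ) ≤ 4) hy0) hsumnn
        linarith
      by_cases hYz : Y n ω = 0
      · have hz : Y (n+1) ω = 0 := by rw [hYrec, hYz, zero_mul]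
        rw [hz]
        rw [zero_pow (by norm_num), zero_div]
        exact mul_nonneg (hPnn (n+1)) hTnn
      · have hYpos : 0 < Y n ω := lt_of_le_of_ne hYnn (Ne.symm hYz)
        have hstep : Y (n+1) ω ^ 3 / S (n+1) ω
            = (1 - Real.sqrt (U n ω))^3 * (Y n ω ^ 3 / S n ω + 4 * E n ω * Y n ω) := by
          rw [hYrec, div_eq_mul_one_div _ (S (n+1) ω), hSrec n ω]
          field_simp
        have h2 : Y n ω ^ 3 / S n ω + 4 * E n ω * Y n ω
            ≤ P n ω * (Y 0 ω ^ 3 + 4 * Y 0 ω * ∑ k ∈ Finset.range (n+1), E k ω) := by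
          rw [Finset.sum_range_succ]
          calc Y n ω ^ 3 / S n ω + 4 * E n ω * Y n ω
              ≤ P n ω * (Y 0 ω ^ 3 + 4 * Y 0 ω * ∑ k ∈ Finset.range n, E k ω)
                + 4 * E n ω * (Y 0 ω * P n ω) := by rw [← hYP]; exact add_le_add hB le_rfl
            _ = P n ω * (Y 0 ω ^ 3 + 4 * Y 0 ω * ((∑ k ∈ Finset.range n, E k ω) + E n ω)) := by
                ring
        have hLnn : 0 ≤ Y n ω ^ 3 / S n ω + 4 * E n ω * Y n ω := by
          have h3 : 0 ≤ Y n ω ^ 3 / S n ω := div_nonneg (pow_nonneg hYnn 3) hS.le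
          have h4 : 0 ≤ 4 * E n ω * Y n ω :=
            mul_nonneg (mul_nonneg (by norm_num) (he n)) hYnn
          linarith
        have hcube : (1 - Real.sqrt (U n ω))^3 ≤ 1 - Real.sqrt (U n ω) := by
          have hpos : (0:ℝ) ≤ 1 + (1 - Real.sqrt (U n ω)) := by linarith [hfac n]
          have h := mul_nonneg (hfac n)
            (mul_nonneg (sub_nonneg.mpr (hfac1 n)) hpos)
          nlinarith [h]
        calc Y (n+1) ω ^ 3 / S (n+1) ω
            = (1 - Real.sqrt (U n ω))^3 * (Y n ω ^ 3 / S n ω + 4 * E n ω * Y n ω) := hstep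
          _ ≤ (1 - Real.sqrt (U n ω))^3
              * (P n ω * (Y 0 ω ^ 3 + 4 * Y 0 ω * ∑ k ∈ Finset.range (n+1), E k ω)) :=
              mul_le_mul_of_nonneg_left h2 (pow_nonneg (hfac n) 3)
          _ ≤ (1 - Real.sqrt (U n ω))
              * (P n ω * (Y 0 ω ^ 3 + 4 * Y 0 ω * ∑ k ∈ Finset.range (n+1), E k ω)) :=
              mul_le_mul_of_nonneg_right hcube (mul_nonneg (hPnn n) hTnn)
          _ = P (n+1) ω * (Y 0 ω ^ 3 + 4 * Y 0 ω * ∑ k ∈ Finset.range (n+1), E k ω) := by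
              rw [hPsucc]; ring
  -- conclude
  obtain ⟨N1, hN1⟩ := eventually_atTop.mp hev
  obtain ⟨N2, hN2⟩ := eventually_atTop.mp hq
  set Cst : ℝ := ∑ k ∈ Finset.range N1, E k ω with hCdef
  have hCnn : 0 ≤ Cst := Finset.sum_nonneg fun k _ => he k
  have hsumle : ∀ n, N1 ≤ n → ∑ k ∈ Finset.range n, E k ω ≤ Cst + ((n:ℝ)^2 + 1) := by
    intro n hn
    rw [← Finset.sum_range_add_sum_Ico _ hn]
    have h2 : ∑ k ∈ Finset.Ico N1 n, E k ω ≤ ∑ k ∈ Finset.Ico N1 n, ((k:ℝ)+1) :=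
      Finset.sum_le_sum fun k hk => hN1 k (Finset.mem_Ico.mp hk).1
    have h3 : ∑ k ∈ Finset.Ico N1 n, ((k:ℝ)+1) ≤ (n:ℝ)^2 + 1 := by
      have hsub : Finset.Ico N1 n ⊆ Finset.range n := by
        rw [Finset.range_eq_Ico]
        exact Finset.Ico_subset_Ico (Nat.zero_le _) le_rfl
      have h4 : ∑ k ∈ Finset.Ico N1 n, ((k:ℝ)+1) ≤ ∑ k ∈ Finset.range n, ((k:ℝ)+1) :=
        Finset.sum_le_sum_of_subset_of_nonneg hsub fun k _ _ => by positivity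
      have h5 : ∑ k ∈ Finset.range n, ((k:ℝ)+1) ≤ (n:ℝ)^2 := by
        calc ∑ k ∈ Finset.range n, ((k:ℝ)+1) ≤ ∑ _k ∈ Finset.range n, (n:ℝ) := by
              refine Finset.sum_le_sum fun k hk => ?_
              have := Finset.mem_range.mp hk
              have : (k:ℝ) + 1 ≤ (n:ℝ) := by exact_mod_cast Nat.succ_le_of_lt this
              linarith
          _ = (n:ℝ) * (n:ℝ) := by rw [Finset.sum_const, Finset.card_range]; ring
          _ = (n:ℝ)^2 := by ring
      linarith
    linarith
  set K : ℝ := Y 0 ω ^ 3 + 4 * Y 0 ω * Cst + 4 * Y 0 ω with hKdef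
  have hKnn : 0 ≤ K := by
    have h1 := pow_nonneg hy0 3
    have h2 := mul_nonneg (mul_nonneg (by norm_num : (0:ℝ) ≤ 4) hy0) hCnn
    have h3 := mul_nonneg (by norm_num : (0:ℝ) ≤ 4) hy0
    rw [hKdef]; linarith
  have htend0 : Tendsto (fun n : ℕ => c ^ n * ((n:ℝ)^2+1) * P n ω) atTop (nhds 0) := by
    refine squeeze_zero' ?_ ?_ hrlim
    · exact Eventually.of_forall fun n =>
        mul_nonneg (mul_nonneg (pow_nonneg hc0 n) (by positivity)) (hPnn n)
    · rw [eventually_atTop]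
      exact ⟨N2, fun n hn => le_of_not_ge (hN2 n hn)⟩
  have htendK : Tendsto (fun n : ℕ => K * (c ^ n * ((n:ℝ)^2+1) * P n ω)) atTop (nhds 0) := by
    have := htend0.const_mul K
    simpa using this
  refine squeeze_zero' ?_ ?_ htendK
  · refine Eventually.of_forall fun n => ?_
    have hYnn : 0 ≤ Y n ω := by rw [(key n).2.1]; exact mul_nonneg hy0 (hPnn n)
    exact div_nonneg (mul_nonneg (pow_nonneg hc0 n) (pow_nonneg hYnn 3)) (key n).1.le
  · rw [eventually_atTop]
    refine ⟨N1, fun n hn => ?_⟩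
    have hb := (key n).2.2
    have hcn : (0:ℝ) ≤ c ^ n := pow_nonneg hc0 n
    have hstep1 : c ^ n * Y n ω ^ 3 / S n ω
        ≤ c ^ n * (P n ω * (Y 0 ω ^ 3 + 4 * Y 0 ω * ∑ k ∈ Finset.range n, E k ω)) := by
      rw [mul_div_assoc]
      exact mul_le_mul_of_nonneg_left hb hcn
    have hstep2 : P n ω * (Y 0 ω ^ 3 + 4 * Y 0 ω * ∑ k ∈ Finset.range n, E k ω)
        ≤ P n ω * (K * ((n:ℝ)^2+1)) := by
      refine mul_le_mul_of_nonneg_left ?_ (hPnn n)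
      have hs := hsumle n hn
      have hmul : 4 * Y 0 ω * ∑ k ∈ Finset.range n, E k ω
          ≤ 4 * Y 0 ω * (Cst + ((n:ℝ)^2+1)) :=
        mul_le_mul_of_nonneg_left hs (mul_nonneg (by norm_num) hy0)
      have e1 : 0 ≤ Y 0 ω ^ 3 * (n:ℝ)^2 := mul_nonneg (pow_nonneg hy0 3) (sq_nonneg _)
      have e2 : 0 ≤ 4 * Y 0 ω * Cst * (n:ℝ)^2 :=
        mul_nonneg (mul_nonneg (mul_nonneg (by norm_num) hy0) hCnn) (sq_nonneg _)
      rw [hKdef]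
      linarith [hmul, e1, e2]
    calc c ^ n * Y n ω ^ 3 / S n ω
        ≤ c ^ n * (P n ω * (Y 0 ω ^ 3 + 4 * Y 0 ω * ∑ k ∈ Finset.range n, E k ω)) := hstep1
      _ ≤ c ^ n * (P n ω * (K * ((n:ℝ)^2+1))) :=
          mul_le_mul_of_nonneg_left hstep2 hcn
      _ = K * (c ^ n * ((n:ℝ)^2+1) * P n ω) := by ring
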